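/- Let α_m, κ_m, α_l, κ_l, F̄_p, ξ_F, d, g, m be positive reals. If α_m·κ_m·g^{α_m−1}/d^{α_m} = 4·m·d²/g² (the prefill stationarity condition for the GQA ratio) and m = α_l·κ_l·ξ_F^{α_l−1}·d^{2·(α_l−1)}/F̄_p^{α_l}, then g = (4·α_l·κ_l·ξ_F^{α_l−1}·d^{2·α_l+α_m}/(α_m·κ_m·F̄_p^{α_l}))^{1/(α_m+1)}. -/

import Mathlib

/-- Prefill-latency-constrained optimal GQA ratio: from the stationarity
condition `αm·κm·g^(αm−1)/d^αm = 4·m·d²/g²` and the multiplier–depth product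
`m = αl·κl·ξF^(αl−1)·d^(2(αl−1))/F̄p^αl`, the GQA ratio satisfies
`g = (4·αl·κl·ξF^(αl−1)·d^(2αl+αm)/(αm·κm·F̄p^αl))^(1/(αm+1))`. -/
theorem prefill_optimal_gqa_ratio
    (αm κm αl κl Fp ξF d g m : ℝ)
    (hαm : 0 < αm) (hκm : 0 < κm) (hαl : 0 < αl) (hκl : 0 < κl)
    (hFp : 0 < Fp) (hξF : 0 < ξF) (hd : 0 < d) (hg : 0 < g) (hm : 0 < m)
    (hstat : αm * κm * g ^ (αm - 1) / d ^ αm = 4 * m * d ^ 2 / g ^ 2)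
    (hmul : m = αl * κl * ξF ^ (αl - 1) * d ^ (2 * (αl - 1)) / Fp ^ αl) :
    g = (4 * αl * κl * ξF ^ (αl - 1) * d ^ (2 * αl + αm) /
          (αm * κm * Fp ^ αl)) ^ (1 / (αm + 1)) := by
  have hdαm : (0:ℝ) < d ^ αm := Real.rpow_pos_of_pos hd _
  have hg2 : (0:ℝ) < g ^ 2 := by positivity
  have h1 : αm * κm * g ^ (αm + 1) = 4 * m * d ^ (αm + 2) := by
    have e1 : g ^ (αm + 1) = g ^ (αm - 1) * g ^ (2:ℕ) := by
      rw [← Real.rpow_natCast g 2, ← Real.rpow_add hg]; congr 1; push_cast; ring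
    have e2 : d ^ (αm + 2) = d ^ αm * d ^ (2:ℕ) := by
      rw [← Real.rpow_natCast d 2, ← Real.rpow_add hd]; norm_num
    rw [e1, e2]
    field_simp at hstat
    push_cast
    linear_combination hstat
  have key : g ^ (αm + 1) = 4 * αl * κl * ξF ^ (αl - 1) * d ^ (2 * αl + αm) /
      (αm * κm * Fp ^ αl) := by
    have e3 : d ^ (2 * αl + αm) = d ^ (2 * (αl - 1)) * d ^ (αm + 2) := by
      rw [← Real.rpow_add hd]; ring_nf
    have hFpα : (0:ℝ) < Fp ^ αl := Real.rpow_pos_of_pos hFp _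
    rw [e3]
    rw [hmul] at h1
    field_simp at h1
    rw [eq_div_iff (by positivity)]
    rw [mul_comm (αl - 1) 2] at h1
    linear_combination h1
  have hpos : αm + 1 ≠ 0 := by positivity
  calc g = (g ^ (αm + 1)) ^ (1 / (αm + 1)) := by
        rw [← Real.rpow_mul hg.le, mul_one_div, div_self hpos, Real.rpow_one]
    _ = _ := by rw [key]
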